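/- ∫_{1/2}^∞ τ⁷ (tanh(π √(τ² − 1/4)) − 1) dτ = −1943/215040. -/

import Mathlib

open Real MeasureTheory

set_option maxHeartbeats 1000000

private lemma bern6 : bernoulli' 6 = 1/42 := by
  rw [bernoulli'_def]
  norm_num [Finset.sum_range_succ, bernoulli'_four, bernoulli'_two, bernoulli'_one,
    bernoulli'_zero, bernoulli'_eq_zero_of_odd (by decide : Odd 3) (by decide),
    bernoulli'_eq_zero_of_odd (by decide : Odd 5) (by decide), Nat.choose]

private lemma bern8 : bernoulli' 8 = -1/30 := by
  rw [bernoulli'_def]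
  norm_num [Finset.sum_range_succ, bern6, bernoulli'_four, bernoulli'_two, bernoulli'_one,
    bernoulli'_zero, bernoulli'_eq_zero_of_odd (by decide : Odd 3) (by decide),
    bernoulli'_eq_zero_of_odd (by decide : Odd 5) (by decide),
    bernoulli'_eq_zero_of_odd (by decide : Odd 7) (by decide), Nat.choose]

private lemma hasSum_zeta_six' : HasSum (fun n : ℕ => (1 : ℝ) / (n : ℝ) ^ 6) (π ^ 6 / 945) := by
  convert hasSum_zeta_nat (k := 3) (by norm_num) using 1
  rw [show bernoulli (2*3) = bernoulli' 6 from bernoulli_eq_bernoulli'_of_ne_one (by norm_num),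
    bern6]
  norm_num [Nat.factorial]
  ring

private lemma hasSum_zeta_eight' : HasSum (fun n : ℕ => (1 : ℝ) / (n : ℝ) ^ 8) (π ^ 8 / 9450) := by
  convert hasSum_zeta_nat (k := 4) (by norm_num) using 1
  rw [show bernoulli (2*4) = bernoulli' 8 from bernoulli_eq_bernoulli'_of_ne_one (by norm_num),
    bern8]
  norm_num [Nat.factorial]
  ring

private lemma hasSum_eta (s : ℕ) (hs : s ≠ 0) {Z : ℝ} (h : HasSum (fun n : ℕ => 1/(n:ℝ)^s) Z) :
    HasSum (fun n : ℕ => (-1)^n / ((n:ℝ)+1)^s) ((1 - 2/2^s) * Z) := by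
  set f : ℕ → ℝ := fun m => -((-1)^m / (m:ℝ)^s) with hf
  have heg : HasSum (fun k : ℕ => (1:ℝ)/((2*k:ℕ):ℝ)^s) (Z / 2^s) := by
    have := h.div_const (2^s)
    refine this.congr_fun ?_
    intro k
    push_cast
    rw [mul_pow, div_div, mul_comm ((k:ℝ)^s)]
  have hog : Summable (fun k : ℕ => (1:ℝ)/((2*k+1:ℕ):ℝ)^s) :=
    h.summable.comp_injective (fun a b hab => by omega)
  obtain ⟨B, hB⟩ := hog
  have htot : HasSum (fun n : ℕ => 1/(n:ℝ)^s) (Z / 2^s + B) := heg.even_add_odd hB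
  have hBval : B = Z - Z / 2^s := by
    have := htot.unique h; linarith
  have hef : HasSum (fun k : ℕ => f (2*k)) (-(Z / 2^s)) := by
    refine heg.neg.congr_fun fun k => ?_
    simp [hf, pow_mul]
  have hofeq : (fun k : ℕ => f (2*k+1)) = fun k : ℕ => (1:ℝ)/((2*k+1:ℕ):ℝ)^s := by
    funext k
    have : Odd (2*k+1) := odd_two_mul_add_one k
    simp [hf, this.neg_one_pow]
    ring
  have hof : HasSum (fun k : ℕ => f (2*k+1)) B := by rw [hofeq]; exact hB
  have hfs : HasSum f (-(Z / 2^s) + B) := hef.even_add_odd hof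
  have hshift : HasSum (fun n : ℕ => f (n+1)) (-(Z / 2^s) + B - ∑ i ∈ Finset.range 1, f i) :=
    ((hasSum_nat_add_iff' 1).mpr hfs)
  have hf0 : ∑ i ∈ Finset.range 1, f i = 0 := by
    simp [hf, zero_pow hs]
  rw [hf0, sub_zero] at hshift
  have : (fun n : ℕ => f (n+1)) = fun n : ℕ => (-1)^n / ((n:ℝ)+1)^s := by
    funext n
    simp [hf, pow_succ]
    ring
  rw [this] at hshift
  convert hshift using 1
  rw [hBval]
  field_simp
  ring

private lemma mono_intble (m : ℕ) {c : ℝ} (hc : 0 < c) :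
    IntegrableOn (fun t : ℝ => t ^ m * Real.exp (-(c * t))) (Set.Ioi 0) := by
  have := integrableOn_rpow_mul_exp_neg_mul_rpow (p := 1) (s := m) (b := c)
    (lt_of_lt_of_le (by norm_num) (Nat.cast_nonneg m)) zero_lt_one hc
  simpa [Real.rpow_natCast, Real.rpow_one, neg_mul] using this

private lemma mono_int (m : ℕ) {c : ℝ} (hc : 0 < c) :
    ∫ t in Set.Ioi (0:ℝ), t ^ m * Real.exp (-(c * t)) = (m.factorial : ℝ) / c ^ (m+1) := by
  have h := integral_rpow_mul_exp_neg_mul_Ioi (a := (m:ℝ)+1) (r := c) (by positivity) hc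
  have h2 : ∀ t ∈ Set.Ioi (0:ℝ),
      t ^ ((m:ℝ) + 1 - 1) * Real.exp (-(c * t)) = t ^ m * Real.exp (-(c * t)) := by
    intro t _
    rw [add_sub_cancel_right, Real.rpow_natCast]
  rw [setIntegral_congr_fun measurableSet_Ioi h2] at h
  rw [h, Real.Gamma_nat_eq_factorial,
    show ((m:ℝ) + 1) = ((m + 1 : ℕ) : ℝ) by push_cast; ring, Real.rpow_natCast]
  field_simp
  rw [← mul_pow, one_div_mul_cancel hc.ne', one_pow]

private lemma poly_key (c : ℝ) : (fun t : ℝ => t * (t^2 + 1/4)^3 * Real.exp (-(c*t)))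
    = fun t : ℝ => t^7 * Real.exp (-(c*t)) + ((3/4) * (t^5 * Real.exp (-(c*t)))
      + ((3/16) * (t^3 * Real.exp (-(c*t))) + (1/64) * (t^1 * Real.exp (-(c*t))))) := by
  funext t; ring

private lemma poly_intble {c : ℝ} (hc : 0 < c) :
    IntegrableOn (fun t : ℝ => t * (t^2 + 1/4)^3 * Real.exp (-(c*t))) (Set.Ioi 0) := by
  rw [poly_key]
  exact ((mono_intble 7 hc).add (((mono_intble 5 hc).const_mul _).add
    (((mono_intble 3 hc).const_mul _).add ((mono_intble 1 hc).const_mul _))))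

private lemma poly_int {c : ℝ} (hc : 0 < c) :
    ∫ t in Set.Ioi (0:ℝ), t * (t^2 + 1/4)^3 * Real.exp (-(c*t))
      = 5040/c^8 + 90/c^6 + (9/8)/c^4 + (1/64)/c^2 := by
  rw [poly_key]
  have i5 := (mono_intble 5 hc).const_mul (3/4 : ℝ)
  have i3 := (mono_intble 3 hc).const_mul (3/16 : ℝ)
  have i1 := (mono_intble 1 hc).const_mul (1/64 : ℝ)
  have h34 := integral_add i3 i1
  have h2 := integral_add i5 (i3.add i1)
  have h1 := integral_add (mono_intble 7 hc) (i5.add (i3.add i1))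
  simp only [Pi.add_apply] at h34 h2 h1
  rw [h1, h2, h34, integral_const_mul, integral_const_mul, integral_const_mul,
    mono_int 7 hc, mono_int 5 hc, mono_int 3 hc, mono_int 1 hc]
  norm_num [Nat.factorial]
  ring

private lemma sqrt_quarter : Real.sqrt (1/4) = 1/2 := by
  rw [show (1/4:ℝ) = (1/2)^2 by norm_num, Real.sqrt_sq (by norm_num)]

private lemma subst_step :
    (∫ τ in Set.Ioi (1/2 : ℝ), τ ^ 7 * (Real.tanh (π * Real.sqrt (τ ^ 2 - 1/4)) - 1))
      = ∫ t in Set.Ioi (0:ℝ), t * (t^2 + 1/4)^3 * (Real.tanh (π * t) - 1) := by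
  have himg : (fun t : ℝ => Real.sqrt (t^2 + 1/4)) '' Set.Ioi 0 = Set.Ioi (1/2 : ℝ) := by
    ext y
    constructor
    · rintro ⟨t, ht, rfl⟩
      simp only [Set.mem_Ioi] at ht ⊢
      calc (1/2:ℝ) = Real.sqrt (1/4) := sqrt_quarter.symm
        _ < Real.sqrt (t^2 + 1/4) := by
            apply Real.sqrt_lt_sqrt (by norm_num)
            nlinarith
    · intro hy
      simp only [Set.mem_Ioi] at hy
      have hy0 : 0 < y := lt_trans (by norm_num) hy
      have hsq : 0 < y^2 - 1/4 := by nlinarith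
      refine ⟨Real.sqrt (y^2 - 1/4), Real.sqrt_pos.mpr hsq, ?_⟩
      show Real.sqrt (Real.sqrt (y^2 - 1/4) ^ 2 + 1/4) = y
      rw [Real.sq_sqrt hsq.le, show y^2 - 1/4 + 1/4 = y^2 by ring, Real.sqrt_sq hy0.le]
  have hderiv : ∀ t ∈ Set.Ioi (0:ℝ), HasDerivWithinAt (fun t : ℝ => Real.sqrt (t^2 + 1/4))
      (t / Real.sqrt (t^2 + 1/4)) (Set.Ioi 0) t := by
    intro t ht
    have hpos : (0:ℝ) < t^2 + 1/4 := by positivity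
    have h1 : HasDerivAt (fun t : ℝ => t^2 + 1/4) (2*t) t := by
      simpa using (hasDerivAt_pow 2 t).add_const (1/4 : ℝ)
    have h2 := (Real.hasDerivAt_sqrt hpos.ne').comp t h1
    have : 1 / (2 * Real.sqrt (t^2 + 1/4)) * (2*t) = t / Real.sqrt (t^2 + 1/4) := by
      have hs : Real.sqrt (t^2 + 1/4) ≠ 0 := (Real.sqrt_pos.mpr hpos).ne'
      set s := Real.sqrt (t^2 + 1/4)
      field_simp
    rw [this] at h2
    exact h2.hasDerivWithinAt
  have hinj : Set.InjOn (fun t : ℝ => Real.sqrt (t^2 + 1/4)) (Set.Ioi 0) := by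
    intro a ha b hb hab
    simp only [Set.mem_Ioi] at ha hb
    have h2 : a^2 = b^2 := by
      have := congrArg (fun x : ℝ => x^2) hab
      simp only [Real.sq_sqrt (by positivity : (0:ℝ) ≤ a^2+1/4),
        Real.sq_sqrt (by positivity : (0:ℝ) ≤ b^2+1/4)] at this
      linarith
    rw [← Real.sqrt_sq ha.le, ← Real.sqrt_sq hb.le, h2]
  rw [← himg, integral_image_eq_integral_abs_deriv_smul measurableSet_Ioi hderiv hinj]
  refine setIntegral_congr_fun measurableSet_Ioi fun t ht => ?_
  simp only [Set.mem_Ioi] at ht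
  have hpos : (0:ℝ) < t^2 + 1/4 := by positivity
  have hs : (0:ℝ) < Real.sqrt (t^2 + 1/4) := Real.sqrt_pos.mpr hpos
  have hs2 : Real.sqrt (t^2 + 1/4) ^ 2 = t^2 + 1/4 := Real.sq_sqrt hpos.le
  have harg : Real.sqrt (Real.sqrt (t^2 + 1/4) ^ 2 - 1/4) = t := by
    rw [hs2, show t^2 + 1/4 - 1/4 = t^2 by ring, Real.sqrt_sq ht.le]
  simp only [smul_eq_mul, harg]
  rw [abs_of_pos (by positivity), ← hs2]
  set s := Real.sqrt (t^2 + 1/4) with hsdef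
  field_simp
  simp only [Real.sqrt_sq hs.le]

private lemma tanh_sub_one (y : ℝ) :
    Real.tanh y - 1 = -2 * Real.exp (-(2*y)) / (1 + Real.exp (-(2*y))) := by
  rw [Real.tanh_eq_sinh_div_cosh, Real.sinh_eq, Real.cosh_eq,
    show -(2*y) = -y + -y by ring, Real.exp_add, Real.exp_neg]
  have h1 : Real.exp y ≠ 0 := (Real.exp_pos y).ne'
  have h2 : Real.exp y + (Real.exp y)⁻¹ ≠ 0 := by positivity
  have h3 : 1 + (Real.exp y)⁻¹ * (Real.exp y)⁻¹ ≠ 0 := by positivity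
  field_simp
  ring

private lemma geom_step {t : ℝ} (ht : 0 < t) :
    HasSum (fun n : ℕ => (-2) * (-1)^n * (t * (t^2 + 1/4)^3 * Real.exp (-(2*π*((n:ℝ)+1)*t))))
      (t * (t^2 + 1/4)^3 * (Real.tanh (π * t) - 1)) := by
  have hx : 0 < 2*π*t := by positivity
  set x := 2*π*t with hxdef
  have hr : ‖-Real.exp (-x)‖ < 1 := by
    rw [norm_neg, Real.norm_eq_abs, abs_of_pos (Real.exp_pos _)]
    exact Real.exp_lt_one_iff.mpr (by linarith)
  have hgeo := hasSum_geometric_of_norm_lt_one hr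
  have h := hgeo.mul_left ((-2) * (t * (t^2 + 1/4)^3 * Real.exp (-x)))
  have heq : ∀ n : ℕ, (-2) * (t * (t^2 + 1/4)^3 * Real.exp (-x)) * (-Real.exp (-x))^n
      = (-2) * (-1)^n * (t * (t^2 + 1/4)^3 * Real.exp (-(2*π*((n:ℝ)+1)*t))) := by
    intro n
    rw [neg_pow, ← Real.exp_nat_mul,
      show -(2*π*((n:ℝ)+1)*t) = (n:ℝ) * (-x) + (-x) by rw [hxdef]; ring, Real.exp_add]
    ring
  have h2 := h.congr_fun (fun n => (heq n).symm)
  convert h2 using 1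
  case e'_3 => rfl
  rw [show π * t = x / 2 by rw [hxdef]; ring, show x = 2 * (x/2) by ring] at *
  rw [tanh_sub_one]
  have h3 : 1 + Real.exp (-(2*(x/2))) ≠ 0 := by positivity
  have h4 : 1 - -Real.exp (-(2*(x/2))) ≠ 0 := by
    have := Real.exp_pos (-(2*(x/2))); intro hcon; linarith [this]
  field_simp
  ring
  have h5 : 1 + Real.exp (-x) ≠ 0 := by positivity
  linear_combination mul_inv_cancel₀ h5

private lemma base_summable (k : ℕ) (hk : 2 ≤ k) :
    Summable (fun n : ℕ => 1/((n:ℝ)+1)^k) := by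
  have h1 : Summable (fun n : ℕ => 1/(n:ℝ)^k) := by
    simpa using Real.summable_one_div_nat_pow.mpr hk
  have h2 := (summable_nat_add_iff 1).mpr h1
  exact h2.congr fun n => by push_cast; ring

theorem integral_tanh_seventh :
    ∫ τ in Set.Ioi (1/2 : ℝ),
      τ ^ 7 * (Real.tanh (π * Real.sqrt (τ ^ 2 - 1/4)) - 1) = -1943/215040 := by
  have hc : ∀ n : ℕ, (0:ℝ) < 2*π*((n:ℝ)+1) := fun n => by positivity
  have hInt : ∀ n : ℕ, Integrable
      (fun t : ℝ => (-2) * (-1)^n * (t * (t^2 + 1/4)^3 * Real.exp (-(2*π*((n:ℝ)+1)*t))))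
      (volume.restrict (Set.Ioi 0)) :=
    fun n => (poly_intble (hc n)).const_mul _
  have hval : ∀ n : ℕ,
      (∫ t in Set.Ioi (0:ℝ), (-2) * (-1)^n * (t * (t^2 + 1/4)^3
        * Real.exp (-(2*π*((n:ℝ)+1)*t))))
      = ((-2) * (-1)^n) * (5040/(2*π*((n:ℝ)+1))^8 + 90/(2*π*((n:ℝ)+1))^6
        + (9/8)/(2*π*((n:ℝ)+1))^4 + (1/64)/(2*π*((n:ℝ)+1))^2) := by
    intro n
    rw [integral_const_mul, poly_int (hc n)]
  have hnorm_val : ∀ n : ℕ,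
      (∫ t in Set.Ioi (0:ℝ), ‖(-2) * (-1)^n * (t * (t^2 + 1/4)^3
        * Real.exp (-(2*π*((n:ℝ)+1)*t)))‖)
      = 2 * (5040/(2*π*((n:ℝ)+1))^8 + 90/(2*π*((n:ℝ)+1))^6
        + (9/8)/(2*π*((n:ℝ)+1))^4 + (1/64)/(2*π*((n:ℝ)+1))^2) := by
    intro n
    have hpt : ∀ t ∈ Set.Ioi (0:ℝ),
        ‖(-2) * (-1)^n * (t * (t^2 + 1/4)^3 * Real.exp (-(2*π*((n:ℝ)+1)*t)))‖
        = 2 * (t * (t^2 + 1/4)^3 * Real.exp (-(2*π*((n:ℝ)+1)*t))) := by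
      intro t ht
      simp only [Set.mem_Ioi] at ht
      have hX : (0:ℝ) < t * (t^2 + 1/4)^3 * Real.exp (-(2*π*((n:ℝ)+1)*t)) :=
        mul_pos (mul_pos ht (by positivity)) (Real.exp_pos _)
      rw [Real.norm_eq_abs, abs_mul, abs_of_pos hX]
      norm_num [abs_mul, abs_pow]
    rw [setIntegral_congr_fun measurableSet_Ioi hpt, integral_const_mul, poly_int (hc n)]
  have hNorm : Summable (fun n : ℕ => ∫ t in Set.Ioi (0:ℝ),
      ‖(-2) * (-1)^n * (t * (t^2 + 1/4)^3 * Real.exp (-(2*π*((n:ℝ)+1)*t)))‖) := by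
    have hS : Summable (fun n : ℕ => (2*5040/(2*π)^8) * (1/((n:ℝ)+1)^8)
        + ((2*90/(2*π)^6) * (1/((n:ℝ)+1)^6) + ((2*(9/8)/(2*π)^4) * (1/((n:ℝ)+1)^4)
        + (2*(1/64)/(2*π)^2) * (1/((n:ℝ)+1)^2)))) :=
      (((base_summable 8 (by norm_num)).mul_left _).add
        (((base_summable 6 (by norm_num)).mul_left _).add
          (((base_summable 4 (by norm_num)).mul_left _).add
            ((base_summable 2 (by norm_num)).mul_left _))))
    refine hS.congr fun n => ?_
    rw [hnorm_val n]
    have hn : ((n:ℝ)+1) ≠ 0 := by positivity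
    field_simp
    ring
  have hE2 : HasSum (fun n : ℕ => (-1)^n/((n:ℝ)+1)^2) (π^2/12) := by
    have h := hasSum_eta 2 (by norm_num) hasSum_zeta_two
    have he : (1 - 2/2^2 : ℝ) * (π^2/6) = π^2/12 := by norm_num; ring
    rwa [he] at h
  have hE4 : HasSum (fun n : ℕ => (-1)^n/((n:ℝ)+1)^4) (7*π^4/720) := by
    have h := hasSum_eta 4 (by norm_num) hasSum_zeta_four
    have he : (1 - 2/2^4 : ℝ) * (π^4/90) = 7*π^4/720 := by norm_num; ring
    rwa [he] at h
  have hE6 : HasSum (fun n : ℕ => (-1)^n/((n:ℝ)+1)^6) (31*π^6/30240) := by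
    have h := hasSum_eta 6 (by norm_num) hasSum_zeta_six'
    have he : (1 - 2/2^6 : ℝ) * (π^6/945) = 31*π^6/30240 := by norm_num; ring
    rwa [he] at h
  have hE8 : HasSum (fun n : ℕ => (-1)^n/((n:ℝ)+1)^8) (127*π^8/1209600) := by
    have h := hasSum_eta 8 (by norm_num) hasSum_zeta_eight'
    have he : (1 - 2/2^8 : ℝ) * (π^8/9450) = 127*π^8/1209600 := by norm_num; ring
    rwa [he] at h
  rw [subst_step,
    setIntegral_congr_fun measurableSet_Ioi (fun t ht => ((geom_step ht).tsum_eq).symm),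
    ← integral_tsum_of_summable_integral_norm hInt hNorm]
  have hcomb := ((hE8.mul_left ((-2)*5040/(2*π)^8)).add
    ((hE6.mul_left ((-2)*90/(2*π)^6)).add
      ((hE4.mul_left ((-2)*(9/8)/(2*π)^4)).add
        (hE2.mul_left ((-2)*(1/64)/(2*π)^2)))))
  have hfn : ∀ n : ℕ, (∫ t in Set.Ioi (0:ℝ),
      (-2) * (-1)^n * (t * (t^2 + 1/4)^3 * Real.exp (-(2*π*((n:ℝ)+1)*t))))
      = ((-2)*5040/(2*π)^8) * ((-1)^n/((n:ℝ)+1)^8)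
        + (((-2)*90/(2*π)^6) * ((-1)^n/((n:ℝ)+1)^6)
        + (((-2)*(9/8)/(2*π)^4) * ((-1)^n/((n:ℝ)+1)^4)
        + ((-2)*(1/64)/(2*π)^2) * ((-1)^n/((n:ℝ)+1)^2))) := by
    intro n
    rw [hval n]
    have hn : ((n:ℝ)+1) ≠ 0 := by positivity
    have hπ : (π : ℝ) ≠ 0 := Real.pi_ne_zero
    field_simp
    ring
  have hfinal : HasSum (fun n : ℕ => ∫ t in Set.Ioi (0:ℝ),
      (-2) * (-1)^n * (t * (t^2 + 1/4)^3 * Real.exp (-(2*π*((n:ℝ)+1)*t))))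
      (-1943/215040 : ℝ) := by
    have h := hcomb.congr_fun hfn
    convert h using 1
    case e'_3 => rfl
    have hπ : (π : ℝ) ≠ 0 := Real.pi_ne_zero
    field_simp
    ring
  exact hfinal.tsum_eq
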